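/- arXiv:2402.10451 — 4 statements merged into one kernel-verified Lean document; each statement's English description precedes it below -/
import Mathlib

section
/- Let g and h be non-identical linear functions. Then: (i) h∘g(x) < g∘h(x) for all x∈ℝ if and only if θ(h)−θ(g) ∈ (0,π)_{2π}; (ii) h∘g = g∘h if and only if θ(h)−θ(g) ∈ {0,π}_{2π}. Moreover, for every x∈ℝ, g∘h(x) − h∘g(x) = β(g)(1−α(h)) − β(h)(1−α(g)) = ‖vec(g)‖·‖vec(h)‖·sin(θ(h)−θ(g)). -/
/-- A linear function `x ↦ a*x + b`. -/
structure LinFun where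
  a : ℝ
  b : ℝ

namespace LinFun

/-- Evaluation of a linear function. -/
def eval (f : LinFun) (x : ℝ) : ℝ := f.a * x + f.b

/-- Composition: `h.comp g` is the linear function `x ↦ h (g x)`. -/
def comp (h g : LinFun) : LinFun := ⟨h.a * g.a, h.a * g.b + h.b⟩

/-- The identical linear function `x ↦ x`. -/
def idf : LinFun := ⟨1, 0⟩

/-- `f` is the identical function (equivalently, its vector `(β f, 1 - α f)` is `(0,0)`,
i.e. its angle is `⊥`). -/
def IsId (f : LinFun) : Prop := f = idf

/-- The Euclidean norm of the vector `(β f, 1 - α f)` associated to `f`. -/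
noncomputable def vecNorm (f : LinFun) : ℝ := Real.sqrt (f.b ^ 2 + (1 - f.a) ^ 2)

/-- The polar angle in `[0, 2π)` of the vector `(β f, 1 - α f)` associated to `f`
(meaningful only when `f` is not identical). -/
noncomputable def theta (f : LinFun) : ℝ :=
  if 0 ≤ Complex.arg ⟨f.b, 1 - f.a⟩ then Complex.arg ⟨f.b, 1 - f.a⟩
  else Complex.arg ⟨f.b, 1 - f.a⟩ + 2 * Real.pi

end LinFun

/-- Congruence of angles modulo `2π`: `x ≡_{2π} y`. -/
def Cong (x y : ℝ) : Prop := ∃ k : ℤ, x - y = 2 * Real.pi * k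

/-- The set `[t1, t2]_{2π}`. -/
def Icc2pi (t1 t2 : ℝ) : Set ℝ :=
  {θ | ∃ l1 l2 : ℝ, Cong l1 t1 ∧ Cong l2 t2 ∧ 0 ≤ l2 - l1 ∧ l2 - l1 < 2 * Real.pi ∧
    θ ∈ Set.Icc l1 l2}

/-- The set `(t1, t2)_{2π}`. -/
def Ioo2pi (t1 t2 : ℝ) : Set ℝ :=
  {θ | ∃ l1 l2 : ℝ, Cong l1 t1 ∧ Cong l2 t2 ∧ 0 ≤ l2 - l1 ∧ l2 - l1 < 2 * Real.pi ∧
    θ ∈ Set.Ioo l1 l2}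

/-- Composite of a list of linear functions: `compList [g₁, …, g_m] = g_m ∘ ⋯ ∘ g₁`. -/
def compList (L : List LinFun) : LinFun := L.foldl (fun acc g => g.comp acc) LinFun.idf

/-- The list `f_{σ(1)}, …, f_{σ(n)}` (0-indexed positions). -/
def permList {n : ℕ} (f : Fin n → LinFun) (σ : Equiv.Perm (Fin n)) : List LinFun :=
  List.ofFn fun i => f (σ i)

/-- `f^σ = f_{σ(n)} ∘ ⋯ ∘ f_{σ(1)}`. -/
def permComp {n : ℕ} (f : Fin n → LinFun) (σ : Equiv.Perm (Fin n)) : LinFun :=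
  compList (permList f σ)

/-- The composite of the functions at the (0-indexed) positions `a, a+1, …, b` of `σ`:
`f_{σ(b)} ∘ ⋯ ∘ f_{σ(a)}` (in 0-indexed notation). -/
def segComp {n : ℕ} (f : Fin n → LinFun) (σ : Equiv.Perm (Fin n)) (a b : ℕ) : LinFun :=
  compList (((permList f σ).drop a).take (b + 1 - a))

/-- The composite corresponding to the `k`-shift `σ_k` of `σ`:
`f^{σ_k} = f_{σ(k)} ∘ ⋯ ∘ f_{σ(1)} ∘ f_{σ(n)} ∘ ⋯ ∘ f_{σ(k+1)}` (1-indexed notation). -/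
def shiftComp {n : ℕ} (f : Fin n → LinFun) (σ : Equiv.Perm (Fin n)) (k : ℕ) : LinFun :=
  compList ((permList f σ).rotate k)

/-- `σ` is a minimum (optimal) permutation for `f₁, …, f_n`. -/
def IsMinimum {n : ℕ} (f : Fin n → LinFun) (σ : Equiv.Perm (Fin n)) : Prop :=
  ∀ ρ : Equiv.Perm (Fin n), (permComp f σ).b ≤ (permComp f ρ).b

/-- `μ` belongs to the neighbourhood `N(σ)`: it is obtained from `σ` by swapping two
adjacent blocks of positions, `(l, …, m)` and `(m+1, …, r)` (0-indexed, `l ≤ m < r < n`). -/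
def InNbhd {n : ℕ} (σ μ : Equiv.Perm (Fin n)) : Prop :=
  ∃ (l m r : ℕ) (_ : l ≤ m) (_ : m < r) (_ : r < n),
    (∀ i : Fin n, (i.val < l ∨ r < i.val) → μ i = σ i) ∧
    (∀ i : Fin n, ∀ _ : l ≤ i.val, ∀ _ : i.val < l + r - m,
      μ i = σ ⟨i.val + m + 1 - l, by omega⟩) ∧
    (∀ i : Fin n, ∀ _ : l + r - m ≤ i.val, ∀ _ : i.val ≤ r,
      μ i = σ ⟨i.val + m - r, by omega⟩)

/-- `σ` is locally optimal for `f₁, …, f_n`. -/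
def LocallyOptimal {n : ℕ} (f : Fin n → LinFun) (σ : Equiv.Perm (Fin n)) : Prop :=
  ∀ μ : Equiv.Perm (Fin n), InNbhd σ μ → (permComp f σ).b ≤ (permComp f μ).b

/-- `σ` is counterclockwise: ignoring the identical functions, some rotation of the sequence
of angles `θ(f_{σ(1)}), …, θ(f_{σ(n)})` is nondecreasing. -/
def Counterclockwise {n : ℕ} (f : Fin n → LinFun) (σ : Equiv.Perm (Fin n)) : Prop :=
  ∃ c : ℕ, ∀ i j : Fin n, ¬ (f (σ i)).IsId → ¬ (f (σ j)).IsId →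
    ((c ≤ i.val ∧ i ≤ j) ∨ (i ≤ j ∧ j.val < c) ∨ (c ≤ i.val ∧ j.val < c)) →
    (f (σ i)).theta ≤ (f (σ j)).theta

/-- `f₁, …, f_n` are colinear: all vectors lie on one line through the origin. -/
def Colinear {n : ℕ} (f : Fin n → LinFun) : Prop :=
  ∃ lam : ℝ, ∀ i : Fin n,
    (f i).IsId ∨ Cong ((f i).theta) lam ∨ Cong ((f i).theta) (lam + Real.pi)

/-- `f₁, …, f_n` are potentially identical: some counterclockwise permutation composes
to the identical function. -/
def PotentiallyIdentical {n : ℕ} (f : Fin n → LinFun) : Prop :=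
  ∃ σ : Equiv.Perm (Fin n), Counterclockwise f σ ∧ (permComp f σ).IsId

/-- The ε-perturbation `f^{(ε)}` of a linear function. -/
noncomputable def epsPert (f : LinFun) (ε : ℝ) : LinFun := if f.a = 0 then ⟨ε, f.b⟩ else f


noncomputable def zf (f : LinFun) : ℂ := ⟨f.b, 1 - f.a⟩

lemma zf_ne_zero {f : LinFun} (hf : ¬ f.IsId) : zf f ≠ 0 := by
  intro h
  apply hf
  have h1 : f.b = 0 := congrArg Complex.re h
  have h2 : 1 - f.a = 0 := congrArg Complex.im h
  have : f.a = 1 := by linarith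
  cases f; simp_all [LinFun.IsId, LinFun.idf]

lemma vecNorm_eq (f : LinFun) : f.vecNorm = ‖zf f‖ := by
  rw [LinFun.vecNorm, Complex.norm_def, Complex.normSq_apply, zf]
  norm_num; ring_nf

lemma theta_cong_arg (f : LinFun) : Cong f.theta (Complex.arg (zf f)) := by
  rw [LinFun.theta, zf, Cong]
  split
  · exact ⟨0, by push_cast; ring⟩
  · exact ⟨1, by push_cast; ring⟩

lemma cross_eq (z w : ℂ) (hz : z ≠ 0) :
    z.re * w.im - w.re * z.im = ‖z‖ * ‖w‖ * Real.sin (w.arg - z.arg) := by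
  have h0z : ‖z‖ ≠ 0 := norm_ne_zero_iff.mpr hz
  have hzre : z.re = ‖z‖ * Real.cos z.arg := by
    rw [Complex.cos_arg hz]; field_simp
  have hzim : z.im = ‖z‖ * Real.sin z.arg := by
    rw [Complex.sin_arg]; field_simp
  have hwre : w.re = ‖w‖ * Real.cos w.arg := by
    by_cases hw : w = 0
    · simp [hw]
    · have h0w : ‖w‖ ≠ 0 := norm_ne_zero_iff.mpr hw
      rw [Complex.cos_arg hw]; field_simp
  have hwim : w.im = ‖w‖ * Real.sin w.arg := by
    by_cases hw : w = 0
    · simp [hw]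
    · have h0w : ‖w‖ ≠ 0 := norm_ne_zero_iff.mpr hw
      rw [Complex.sin_arg]; field_simp
  rw [hzre, hzim, hwre, hwim, Real.sin_sub]; ring

lemma sin_cong {x y : ℝ} (h : Cong x y) : Real.sin x = Real.sin y := by
  obtain ⟨k, hk⟩ := h
  have hx : x = y + k * (2 * Real.pi) := by linarith [hk]
  rw [hx, Real.sin_add_int_mul_two_pi]

lemma cong_sub {x y x' y' : ℝ} (hx : Cong x x') (hy : Cong y y') : Cong (x - y) (x' - y') := by
  obtain ⟨k, hk⟩ := hx; obtain ⟨l, hl⟩ := hy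
  exact ⟨k - l, by push_cast; linarith⟩

lemma sin_zero_iff_cong {x : ℝ} :
    Real.sin x = 0 ↔ Cong x 0 ∨ Cong x Real.pi := by
  rw [Real.sin_eq_zero_iff]
  constructor
  · rintro ⟨n, hn⟩
    rcases Int.even_or_odd n with ⟨m, hm⟩ | ⟨m, hm⟩
    · left; exact ⟨m, by subst hm; push_cast at hn ⊢; linarith⟩
    · right; exact ⟨m, by subst hm; push_cast at hn ⊢; linarith⟩
  · rintro (⟨k, hk⟩ | ⟨k, hk⟩)
    · exact ⟨2 * k, by push_cast; linarith⟩
    · exact ⟨2 * k + 1, by push_cast; linarith⟩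

lemma sin_shift (θ : ℝ) (k : ℤ) : Real.sin (θ - 2 * Real.pi * k) = Real.sin θ := by
  have h := Real.sin_add_int_mul_two_pi (θ - 2 * Real.pi * k) k
  rw [show θ - 2 * Real.pi * k + (k : ℝ) * (2 * Real.pi) = θ by push_cast; ring] at h
  exact h.symm

lemma mem_Ioo2pi_iff {θ : ℝ} :
    θ ∈ Ioo2pi 0 Real.pi ↔ ∃ k : ℤ, 2 * Real.pi * k < θ ∧ θ < 2 * Real.pi * k + Real.pi := by
  have hπ := Real.pi_pos
  constructor
  · rintro ⟨l1, l2, ⟨k1, hk1⟩, ⟨k2, hk2⟩, h0, h2, hθ1, hθ2⟩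
    have hl1 : l1 = 2 * Real.pi * k1 := by linarith
    have hl2 : l2 = Real.pi + 2 * Real.pi * k2 := by linarith
    have hdr1 : (-1 : ℝ) < ((k2 - k1 : ℤ) : ℝ) := by push_cast; nlinarith
    have hdr2 : ((k2 - k1 : ℤ) : ℝ) < 1 := by push_cast; nlinarith
    have hd1 : (-1 : ℤ) < k2 - k1 := by exact_mod_cast hdr1
    have hd2 : (k2 - k1 : ℤ) < 1 := by exact_mod_cast hdr2
    have hd : k2 = k1 := by omega
    subst hd
    exact ⟨k2, by linarith [hθ1], by linarith [hθ2]⟩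
  · rintro ⟨k, h1, h2⟩
    exact ⟨2 * Real.pi * k, 2 * Real.pi * k + Real.pi, ⟨k, by ring⟩, ⟨k, by ring⟩,
      by linarith, by linarith, Set.mem_Ioo.mpr ⟨h1, h2⟩⟩

lemma sin_pos_iff_mem {θ : ℝ} :
    0 < Real.sin θ ↔ θ ∈ Ioo2pi 0 Real.pi := by
  rw [mem_Ioo2pi_iff]
  have hπ := Real.pi_pos
  have h2π : 0 < 2 * Real.pi := by linarith
  constructor
  · intro hs
    set k : ℤ := ⌊θ / (2 * Real.pi)⌋ with hk
    have h1 : (k : ℝ) ≤ θ / (2 * Real.pi) := Int.floor_le _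
    have h2 : θ / (2 * Real.pi) < k + 1 := Int.lt_floor_add_one _
    have e : 2 * Real.pi * (θ / (2 * Real.pi)) = θ := by field_simp
    have hy1 : 2 * Real.pi * k ≤ θ := by
      nlinarith [mul_le_mul_of_nonneg_left h1 h2π.le]
    have hy2 : θ < 2 * Real.pi * k + 2 * Real.pi := by
      nlinarith [mul_lt_mul_of_pos_left h2 h2π]
    have hsy : Real.sin (θ - 2 * Real.pi * k) = Real.sin θ := sin_shift θ k
    refine ⟨k, ?_, ?_⟩
    · rcases eq_or_lt_of_le hy1 with h | h
      · exfalso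
        rw [← hsy, ← h, sub_self, Real.sin_zero] at hs
        exact lt_irrefl 0 hs
      · exact h
    · by_contra hle
      push_neg at hle
      have hs2 : Real.sin (θ - 2 * Real.pi * k)
          = -Real.sin (θ - 2 * Real.pi * k - Real.pi) := by
        conv_lhs => rw [show θ - 2 * Real.pi * k
          = (θ - 2 * Real.pi * k - Real.pi) + Real.pi from by ring]
        exact Real.sin_add_pi _
      have hnn : 0 ≤ Real.sin (θ - 2 * Real.pi * k - Real.pi) :=
        Real.sin_nonneg_of_nonneg_of_le_pi (by linarith) (by linarith)
      have : Real.sin (θ - 2 * Real.pi * k) ≤ 0 := by rw [hs2]; linarith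
      linarith [hsy ▸ hs]
  · rintro ⟨k, h1, h2⟩
    rw [← sin_shift θ k]
    exact Real.sin_pos_of_pos_of_lt_pi (by linarith) (by linarith)

/-- Lemma on commutation of two linear functions. -/
theorem stmt0 (g h : LinFun) (hg : ¬ g.IsId) (hh : ¬ h.IsId) :
    ((∀ x : ℝ, (h.comp g).eval x < (g.comp h).eval x) ↔
      h.theta - g.theta ∈ Ioo2pi 0 Real.pi) ∧
    (h.comp g = g.comp h ↔
      (Cong (h.theta - g.theta) 0 ∨ Cong (h.theta - g.theta) Real.pi)) ∧
    (∀ x : ℝ, (g.comp h).eval x - (h.comp g).eval x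
      = g.b * (1 - h.a) - h.b * (1 - g.a)) ∧
    (∀ x : ℝ, (g.comp h).eval x - (h.comp g).eval x
      = g.vecNorm * h.vecNorm * Real.sin (h.theta - g.theta)) := by
  have hzg := zf_ne_zero hg
  have hzh := zf_ne_zero hh
  have habsg : 0 < ‖zf g‖ := norm_pos_iff.mpr hzg
  have habsh : 0 < ‖zf h‖ := norm_pos_iff.mpr hzh
  have hvg : 0 < g.vecNorm := by rw [vecNorm_eq]; exact habsg
  have hvh : 0 < h.vecNorm := by rw [vecNorm_eq]; exact habsh
  have key : ∀ x : ℝ, (LinFun.comp g h).eval x - (LinFun.comp h g).eval x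
      = g.b * (1 - h.a) - h.b * (1 - g.a) := by
    intro x; simp only [LinFun.eval, LinFun.comp]; ring
  have hsin : Real.sin (h.theta - g.theta) = Real.sin ((zf h).arg - (zf g).arg) :=
    sin_cong (cong_sub (theta_cong_arg h) (theta_cong_arg g))
  have hcross : g.b * (1 - h.a) - h.b * (1 - g.a)
      = g.vecNorm * h.vecNorm * Real.sin (h.theta - g.theta) := by
    have hc := cross_eq (zf g) (zf h) hzg
    simp only [zf] at hc
    rw [vecNorm_eq, vecNorm_eq, hsin]
    exact hc
  refine ⟨?_, ?_, key, fun x => by rw [key x, hcross]⟩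
  · rw [← sin_pos_iff_mem]
    constructor
    · intro hlt
      have h0 := hlt 0
      have hD : 0 < g.vecNorm * h.vecNorm * Real.sin (h.theta - g.theta) := by
        rw [← hcross]; have := key 0; linarith
      nlinarith [mul_pos hvg hvh]
    · intro hpos x
      have hD : 0 < g.b * (1 - h.a) - h.b * (1 - g.a) := by
        rw [hcross]
        exact mul_pos (mul_pos hvg hvh) hpos
      have := key x; linarith
  · rw [← sin_zero_iff_cong]
    constructor
    · intro heq
      have hD : g.b * (1 - h.a) - h.b * (1 - g.a) = 0 := by
        have := key 0
        rw [heq] at this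
        linarith
      rw [hcross] at hD
      rcases mul_eq_zero.mp hD with h' | h'
      · exact absurd h' (mul_pos hvg hvh).ne'
      · exact h'
    · intro hs
      have hD : g.b * (1 - h.a) - h.b * (1 - g.a) = 0 := by
        rw [hcross, hs, mul_zero]
      show LinFun.mk _ _ = LinFun.mk _ _
      simp only [LinFun.comp, LinFun.mk.injEq]
      exact ⟨by ring, by linarith⟩
end

section
/- Let f₁,…,f_n be monotone linear functions. Then f₁,…,f_n are colinear if and only if every permutation σ of [n] is minimum (equivalently, f^σ = f^ρ for all permutations σ,ρ). -/
section Aux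

open Complex

lemma LinFun.ext' {f g : LinFun} (h1 : f.a = g.a) (h2 : f.b = g.b) : f = g := by
  cases f; cases g; simp_all

/-- the vector of `f` as a complex number -/
noncomputable def lvec (f : LinFun) : ℂ := ⟨f.b, 1 - f.a⟩

lemma isId_iff_lvec {f : LinFun} : f.IsId ↔ lvec f = 0 := by
  constructor
  · rintro rfl; simp [lvec, LinFun.idf, Complex.ext_iff]
  · intro h
    have h1 : f.b = 0 := by simpa [lvec] using congrArg Complex.re h
    have h2 : 1 - f.a = 0 := by simpa [lvec] using congrArg Complex.im h
    exact LinFun.ext' (by simp [LinFun.idf]; linarith) (by simp [LinFun.idf, h1])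

lemma theta_coe (f : LinFun) : ((f.theta : Real.Angle)) = (((lvec f).arg : ℝ) : Real.Angle) := by
  unfold LinFun.theta
  split
  · rfl
  · show ((Complex.arg (lvec f) + 2 * Real.pi : ℝ) : Real.Angle) = _
    rw [Real.Angle.coe_add, Real.Angle.coe_two_pi, add_zero]

lemma cong_iff {x y : ℝ} : Cong x y ↔ ((x : Real.Angle) = (y : Real.Angle)) :=
  Real.Angle.angle_eq_iff_two_pi_dvd_sub.symm

lemma exp_eq_of_angle_eq {x y : ℝ} (h : ((x : Real.Angle)) = y) :
    Complex.exp (x * Complex.I) = Complex.exp (y * Complex.I) := by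
  obtain ⟨k, hk⟩ := Real.Angle.angle_eq_iff_two_pi_dvd_sub.mp h
  have hx : (x : ℂ) * I = (y : ℂ) * I + (k : ℂ) * (2 * (Real.pi : ℂ) * I) := by
    have hr : x = y + 2 * Real.pi * k := by linarith
    rw [hr]; push_cast; ring
  rw [hx, Complex.exp_add, Complex.exp_int_mul_two_pi_mul_I, mul_one]

end Aux

section Aux2
open Complex

lemma idf_comp (x : LinFun) : LinFun.idf.comp x = x :=
  LinFun.ext' (by simp [LinFun.comp, LinFun.idf]) (by simp [LinFun.comp, LinFun.idf])

lemma comp_idf (x : LinFun) : x.comp LinFun.idf = x :=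
  LinFun.ext' (by simp [LinFun.comp, LinFun.idf]) (by simp [LinFun.comp, LinFun.idf])

lemma comp_assoc (h g k : LinFun) : (h.comp g).comp k = h.comp (g.comp k) :=
  LinFun.ext' (by simp [LinFun.comp]; ring) (by simp [LinFun.comp]; ring)

lemma comp_comm_iff {x y : LinFun} :
    x.comp y = y.comp x ↔
      (lvec x).re * (lvec y).im - (lvec y).re * (lvec x).im = 0 := by
  constructor
  · intro h
    have hb : x.a * y.b + x.b = y.a * x.b + y.b := congrArg LinFun.b h
    show x.b * (1 - y.a) - y.b * (1 - x.a) = 0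
    linarith
  · intro h
    have h' : x.b * (1 - y.a) - y.b * (1 - x.a) = 0 := h
    exact LinFun.ext' (mul_comm x.a y.a) (by show x.a * y.b + x.b = y.a * x.b + y.b; linarith)

lemma cross_zero_of_ray {x y : LinFun} {u : ℂ} {r s : ℝ}
    (hx : lvec x = (r : ℂ) * u) (hy : lvec y = (s : ℂ) * u) :
    (lvec x).re * (lvec y).im - (lvec y).re * (lvec x).im = 0 := by
  rw [hx, hy]; simp [Complex.mul_re, Complex.mul_im]; ring

lemma foldl_comp (L : List LinFun) (s : LinFun) :
    L.foldl (fun acc g => g.comp acc) s = (compList L).comp s := by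
  induction L generalizing s with
  | nil => exact (idf_comp s).symm
  | cons x L ih =>
      show L.foldl _ (x.comp s) = (compList (x :: L)).comp s
      rw [ih (x.comp s)]
      have : compList (x :: L) = (compList L).comp x := by
        show L.foldl _ (x.comp LinFun.idf) = _
        rw [ih, comp_idf]
      rw [this, comp_assoc]

lemma compList_cons (x : LinFun) (L : List LinFun) :
    compList (x :: L) = (compList L).comp x := by
  show L.foldl _ (x.comp LinFun.idf) = _
  rw [foldl_comp, comp_idf]

lemma compList_a (L : List LinFun) : (compList L).a = (L.map LinFun.a).prod := by
  induction L with
  | nil => simp [compList, LinFun.idf]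
  | cons x L ih => rw [compList_cons]; simp [LinFun.comp, ih]; ring

lemma compList_a_pos (L : List LinFun) (h : ∀ x ∈ L, 0 < x.a) : 0 < (compList L).a := by
  rw [compList_a]
  apply List.prod_pos
  intro a ha
  obtain ⟨x, hx, rfl⟩ := List.mem_map.mp ha
  exact h x hx

end Aux2

section Aux3
open Complex

/-- From colinearity: every vector is a real multiple of a common unit vector. -/
lemma colinear_ray {n : ℕ} {f : Fin n → LinFun} (h : Colinear f) :
    ∃ lam : ℝ, ∀ i : Fin n, ∃ r : ℝ,
      lvec (f i) = (r : ℂ) * Complex.exp ((lam : ℂ) * Complex.I) := by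
  obtain ⟨lam, hlam⟩ := h
  refine ⟨lam, fun i => ?_⟩
  rcases hlam i with hid | hc | hc
  · exact ⟨0, by rw [isId_iff_lvec.mp hid]; simp⟩
  · refine ⟨‖lvec (f i)‖, ?_⟩
    have h1 : (((lvec (f i)).arg : ℝ) : Real.Angle) = (lam : Real.Angle) :=
      (theta_coe (f i)) ▸ (cong_iff.mp hc)
    rw [← exp_eq_of_angle_eq h1, Complex.norm_mul_exp_arg_mul_I]
  · refine ⟨-‖lvec (f i)‖, ?_⟩
    have h1 : (((lvec (f i)).arg : ℝ) : Real.Angle) = ((lam + Real.pi : ℝ) : Real.Angle) :=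
      (theta_coe (f i)) ▸ (cong_iff.mp hc)
    have h2 := Complex.norm_mul_exp_arg_mul_I (lvec (f i))
    rw [exp_eq_of_angle_eq h1] at h2
    have h3 : Complex.exp (((lam + Real.pi : ℝ) : ℂ) * Complex.I)
        = - Complex.exp ((lam : ℂ) * Complex.I) := by
      push_cast
      rw [add_mul, Complex.exp_add, Complex.exp_pi_mul_I]
      ring
    conv_lhs => rw [← h2]
    rw [h3]; push_cast; ring

/-- From pairwise vanishing cross products: colinearity. -/
lemma colinear_of_cross {n : ℕ} {f : Fin n → LinFun}
    (h : ∀ i j : Fin n,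
      (lvec (f i)).re * (lvec (f j)).im - (lvec (f j)).re * (lvec (f i)).im = 0) :
    Colinear f := by
  by_cases hall : ∀ i, (f i).IsId
  · exact ⟨0, fun i => Or.inl (hall i)⟩
  push_neg at hall
  obtain ⟨i0, hi0⟩ := hall
  have hz0 : lvec (f i0) ≠ 0 := fun hz => hi0 (isId_iff_lvec.mpr hz)
  refine ⟨(f i0).theta, fun j => ?_⟩
  by_cases hj : (f j).IsId
  · exact Or.inl hj
  right
  have hzj : lvec (f j) ≠ 0 := fun hz => hj (isId_iff_lvec.mpr hz)
  have him : (lvec (f j) * (starRingEnd ℂ) (lvec (f i0))).im = 0 := by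
    have := h i0 j
    simp only [Complex.mul_im, Complex.conj_re, Complex.conj_im]
    linarith [this]
  have hreal : lvec (f j) * (starRingEnd ℂ) (lvec (f i0))
      = (((lvec (f j) * (starRingEnd ℂ) (lvec (f i0))).re : ℝ) : ℂ) := by
    apply Complex.ext
    · simp
    · simp [him]
  have hns : ((Complex.normSq (lvec (f i0)) : ℝ) : ℂ) ≠ 0 := by
    simpa [Complex.normSq_eq_zero] using hz0
  have hconj : (starRingEnd ℂ) (lvec (f i0)) * lvec (f i0)
      = ((Complex.normSq (lvec (f i0)) : ℝ) : ℂ) := by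
    rw [mul_comm, Complex.mul_conj]
  have h1 : lvec (f j) * ((Complex.normSq (lvec (f i0)) : ℝ) : ℂ)
      = (((lvec (f j) * (starRingEnd ℂ) (lvec (f i0))).re : ℝ) : ℂ) * lvec (f i0) := by
    conv_lhs => rw [← hconj, ← mul_assoc, hreal]
  set r : ℝ := (lvec (f j) * (starRingEnd ℂ) (lvec (f i0))).re
      / Complex.normSq (lvec (f i0)) with hrdef
  have hzjr : lvec (f j) = (r : ℂ) * lvec (f i0) := by
    rw [hrdef]
    push_cast
    rw [div_mul_eq_mul_div, eq_div_iff hns]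
    linear_combination h1
  have hr0 : r ≠ 0 := by
    intro h0
    apply hzj
    rw [hzjr, h0]; simp
  rcases lt_or_gt_of_ne hr0 with hneg | hpos
  · -- r < 0 : angle is lam + π
    right
    rw [cong_iff, theta_coe (f j), Real.Angle.coe_add, theta_coe (f i0)]
    have hargj : (lvec (f j)).arg = (-(lvec (f i0))).arg := by
      have hx : lvec (f j) = ((-r : ℝ) : ℂ) * (-(lvec (f i0))) := by rw [hzjr]; push_cast; ring
      rw [hx]
      exact Complex.arg_real_mul (-(lvec (f i0))) (by linarith)
    rw [hargj, Complex.arg_neg_coe_angle hz0]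
  · -- r > 0 : angle is lam
    left
    rw [cong_iff, theta_coe (f j), theta_coe (f i0)]
    have hargj : (lvec (f j)).arg = (lvec (f i0)).arg := by
      rw [hzjr]
      exact Complex.arg_real_mul (lvec (f i0)) hpos
    rw [hargj]

end Aux3

section Aux4

lemma permList_perm {n : ℕ} (f : Fin n → LinFun) (σ ρ : Equiv.Perm (Fin n)) :
    (permList f σ).Perm (permList f ρ) := by
  have h1 : (permList f σ).Perm (List.ofFn f) := Equiv.Perm.ofFn_comp_perm σ f
  have h2 : (permList f ρ).Perm (List.ofFn f) := Equiv.Perm.ofFn_comp_perm ρ f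
  exact h1.trans h2.symm

lemma permComp_a_eq {n : ℕ} (f : Fin n → LinFun) (σ ρ : Equiv.Perm (Fin n)) :
    (permComp f σ).a = (permComp f ρ).a := by
  unfold permComp
  rw [compList_a, compList_a]
  exact List.Perm.prod_eq ((permList_perm f σ ρ).map LinFun.a)

lemma permComp_eq_of_colinear {n : ℕ} (f : Fin n → LinFun) (h : Colinear f)
    (σ ρ : Equiv.Perm (Fin n)) : permComp f σ = permComp f ρ := by
  obtain ⟨lam, hray⟩ := colinear_ray h
  have hcomm : ∀ i j : Fin n, (f i).comp (f j) = (f j).comp (f i) := by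
    intro i j
    obtain ⟨r, hr⟩ := hray i
    obtain ⟨s, hs⟩ := hray j
    exact comp_comm_iff.mpr (cross_zero_of_ray hr hs)
  unfold permComp compList
  refine List.Perm.foldl_eq' (permList_perm f σ ρ) ?_ _
  intro x hx y hy z
  obtain ⟨i, rfl⟩ := List.mem_ofFn.mp hx
  obtain ⟨j, rfl⟩ := List.mem_ofFn.mp hy
  show (f (σ j)).comp ((f (σ i)).comp z) = (f (σ i)).comp ((f (σ j)).comp z)
  rw [← comp_assoc, ← comp_assoc, hcomm]

lemma cross_of_allEq {n : ℕ} {f : Fin n → LinFun} (hf : ∀ i, 0 < (f i).a)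
    (hEq : ∀ σ ρ : Equiv.Perm (Fin n), permComp f σ = permComp f ρ) :
    ∀ i j : Fin n,
      (lvec (f i)).re * (lvec (f j)).im - (lvec (f j)).re * (lvec (f i)).im = 0 := by
  intro i j
  by_cases hij : i = j
  · subst hij; ring
  obtain ⟨m, rfl⟩ : ∃ m, n = m + 2 := by
    rcases n with _ | _ | m
    · exact i.elim0
    · exact absurd (Fin.ext (by have h1 := i.isLt; have h2 := j.isLt; omega)) hij
    · exact ⟨m, rfl⟩
  have h01 : (0 : Fin (m + 2)) ≠ 1 := by
    intro h; simpa using congrArg Fin.val h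
  set j' : Fin (m + 2) := Equiv.swap (0 : Fin (m + 2)) i j with hj'def
  have hj'0 : j' ≠ 0 := by
    intro h0
    apply hij
    have hthis := congrArg (Equiv.swap (0 : Fin (m + 2)) i) h0
    rw [Equiv.swap_apply_self] at hthis
    exact (hthis.trans (Equiv.swap_apply_left 0 i)).symm
  set ρ : Equiv.Perm (Fin (m + 2)) := (Equiv.swap 1 j').trans (Equiv.swap 0 i) with hρdef
  set ρ' : Equiv.Perm (Fin (m + 2)) := (Equiv.swap 0 1).trans ρ with hρ'def
  have hρ0 : ρ 0 = i := by
    show Equiv.swap 0 i (Equiv.swap 1 j' 0) = i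
    rw [Equiv.swap_apply_of_ne_of_ne h01 (Ne.symm hj'0), Equiv.swap_apply_left]
  have hρ1 : ρ 1 = j := by
    show Equiv.swap 0 i (Equiv.swap 1 j' 1) = j
    rw [Equiv.swap_apply_left, hj'def, Equiv.swap_apply_self]
  have hρ'0 : ρ' 0 = j := by
    show ρ (Equiv.swap 0 1 0) = j
    rw [Equiv.swap_apply_left]; exact hρ1
  have hρ'1 : ρ' 1 = i := by
    show ρ (Equiv.swap 0 1 1) = i
    rw [Equiv.swap_apply_right]; exact hρ0
  have hρ'k : ∀ k : Fin m, ρ' k.succ.succ = ρ k.succ.succ := by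
    intro k
    show ρ (Equiv.swap 0 1 k.succ.succ) = ρ k.succ.succ
    apply congrArg
    apply Equiv.swap_apply_of_ne_of_ne
    · exact Fin.succ_ne_zero _
    · intro hcontra
      rw [← Fin.succ_zero_eq_one] at hcontra
      exact Fin.succ_ne_zero k (Fin.succ_injective _ hcontra)
  have hlist : ∀ τ : Equiv.Perm (Fin (m + 2)), permList f τ
      = f (τ 0) :: f (τ 1) :: List.ofFn (fun k : Fin m => f (τ k.succ.succ)) := by
    intro τ
    show List.ofFn (fun x => f (τ x)) = _
    rw [List.ofFn_succ]
    congr 1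
    rw [List.ofFn_succ, Fin.succ_zero_eq_one]
  have hT : List.ofFn (fun k : Fin m => f (ρ' k.succ.succ))
      = List.ofFn (fun k : Fin m => f (ρ k.succ.succ)) :=
    congrArg List.ofFn (funext fun k => by rw [hρ'k])
  have hEq' := hEq ρ ρ'
  unfold permComp at hEq'
  rw [hlist ρ, hlist ρ', hρ0, hρ1, hρ'0, hρ'1, hT, compList_cons, compList_cons,
    compList_cons, compList_cons] at hEq'
  set C := compList (List.ofFn (fun k : Fin m => f (ρ k.succ.succ))) with hCdef
  have hCa : 0 < C.a := by
    apply compList_a_pos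
    intro x hx
    obtain ⟨k, rfl⟩ := List.mem_ofFn.mp hx
    exact hf _
  have hb : C.a * (f j).a * (f i).b + (C.a * (f j).b + C.b)
      = C.a * (f i).a * (f j).b + (C.a * (f i).b + C.b) :=
    congrArg LinFun.b hEq'
  have key : (f j).a * (f i).b + (f j).b = (f i).a * (f j).b + (f i).b := by
    apply mul_left_cancel₀ (ne_of_gt hCa)
    ring_nf
    ring_nf at hb
    linarith
  show (f i).b * (1 - (f j).a) - (f j).b * (1 - (f i).a) = 0
  linarith

end Aux4

/-- Theorem: colinearity is equivalent to every permutation being minimum. -/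
theorem stmt2 {n : ℕ} (f : Fin n → LinFun) (hf : ∀ i, 0 < (f i).a) :
    (Colinear f ↔ ∀ σ : Equiv.Perm (Fin n), IsMinimum f σ) ∧
    ((∀ σ : Equiv.Perm (Fin n), IsMinimum f σ) ↔
      ∀ σ ρ : Equiv.Perm (Fin n), permComp f σ = permComp f ρ) := by
  have iff2 : (∀ σ : Equiv.Perm (Fin n), IsMinimum f σ) ↔
      ∀ σ ρ : Equiv.Perm (Fin n), permComp f σ = permComp f ρ := by
    constructor
    · intro h σ ρ
      exact LinFun.ext' (permComp_a_eq f σ ρ) (le_antisymm (h σ ρ) (h ρ σ))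
    · intro h σ ρ
      exact le_of_eq (congrArg LinFun.b (h σ ρ))
  refine ⟨?_, iff2⟩
  rw [iff2]
  constructor
  · exact fun h σ ρ => permComp_eq_of_colinear f h σ ρ
  · intro h
    exact colinear_of_cross (cross_of_allEq hf h)
end

section
/- Let f₁,…,f_n be monotone linear functions and let τ be a counterclockwise permutation of [n]. Then the cyclic sequence of composites of the shifts of τ, namely (f^{τ_0}, f^{τ_1}, …, f^{τ_{n−1}}), is cyclically unimodal with respect to intercepts: there exist k,ℓ ∈ {0,…,n−1} such that, reading indices modulo n, β(f^{τ_k}) ≤ β(f^{τ_{k+1}}) ≤ ⋯ ≤ β(f^{τ_ℓ}) ≥ β(f^{τ_{ℓ+1}}) ≥ ⋯ ≥ β(f^{τ_{k−1}}) ≥ β(f^{τ_k}). -/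
open Real

namespace StmtAux

lemma comp_a (h g : LinFun) : (h.comp g).a = h.a * g.a := rfl
lemma comp_b (h g : LinFun) : (h.comp g).b = h.a * g.b + h.b := rfl

lemma comp_assoc (h g k : LinFun) : (h.comp g).comp k = h.comp (g.comp k) := by
  simp only [LinFun.comp, LinFun.mk.injEq]
  constructor <;> ring

lemma comp_idf (f : LinFun) : f.comp LinFun.idf = f := by
  cases f with | mk a b => simp [LinFun.comp, LinFun.idf]

lemma idf_comp (f : LinFun) : LinFun.idf.comp f = f := by
  cases f with | mk a b => simp [LinFun.comp, LinFun.idf]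

lemma foldl_comp (T : List LinFun) : ∀ x : LinFun,
    T.foldl (fun acc g => g.comp acc) x = (compList T).comp x := by
  induction T with
  | nil => intro x; simp [compList, idf_comp]
  | cons h T ih =>
    intro x
    have h1 : compList (h :: T) = (compList T).comp h := by
      show (h :: T).foldl _ LinFun.idf = _
      rw [List.foldl_cons, ih (h.comp LinFun.idf), comp_idf]
    rw [List.foldl_cons, ih (h.comp x), h1, comp_assoc]

lemma compList_cons (h : LinFun) (T : List LinFun) :
    compList (h :: T) = (compList T).comp h := by
  show (h :: T).foldl _ LinFun.idf = _
  rw [List.foldl_cons, foldl_comp T (h.comp LinFun.idf), comp_idf]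

lemma compList_append_singleton (T : List LinFun) (g : LinFun) :
    compList (T ++ [g]) = g.comp (compList T) := by
  induction T with
  | nil =>
    simp only [List.nil_append]
    rw [compList_cons]
    show LinFun.idf.comp g = g.comp LinFun.idf
    rw [idf_comp, comp_idf]
  | cons h T ih =>
    rw [List.cons_append, compList_cons, ih, comp_assoc, ← compList_cons]

lemma compList_a_pos (L : List LinFun) (h : ∀ x ∈ L, 0 < x.a) : 0 < (compList L).a := by
  induction L with
  | nil => norm_num [compList, LinFun.idf]
  | cons g T ih =>
    rw [compList_cons, comp_a]
    exact mul_pos (ih fun x hx => h x (List.mem_cons_of_mem _ hx)) (h g List.mem_cons_self)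

end StmtAux

lemma shiftComp_eq {n : ℕ} (f : Fin n → LinFun) (τ : Equiv.Perm (Fin n)) (k : ℕ) :
    shiftComp f τ k = compList ((permList f τ).rotate k) := rfl

lemma permList_length {n : ℕ} (f : Fin n → LinFun) (τ : Equiv.Perm (Fin n)) :
    (permList f τ).length = n := by simp [permList]

lemma shift_step {n : ℕ} (hn : 0 < n) (f : Fin n → LinFun) (τ : Equiv.Perm (Fin n)) (k : ℕ) :
    (shiftComp f τ (k+1)).a = (shiftComp f τ k).a ∧
    (shiftComp f τ (k+1)).b =
      (f (τ ⟨k % n, Nat.mod_lt k hn⟩)).a * (shiftComp f τ k).b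
        + (1 - (shiftComp f τ k).a) * (f (τ ⟨k % n, Nat.mod_lt k hn⟩)).b := by
  have hlen : (permList f τ).length = n := permList_length f τ
  set L := permList f τ with hL
  set M := L.rotate k with hM
  have hMlen : M.length = n := by rw [hM, List.length_rotate, hlen]
  obtain ⟨g, T, hgT⟩ : ∃ g T, M = g :: T := by
    cases hMc : M with
    | nil => rw [hMc] at hMlen; simp at hMlen; omega
    | cons g T => exact ⟨g, T, rfl⟩
  have hg : g = f (τ ⟨k % n, Nat.mod_lt k hn⟩) := by
    have h1 : M = L.rotate (k % L.length) := by rw [hM, List.rotate_mod]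
    have h2 : M.head? = L[k % L.length]? :=
      h1 ▸ List.head?_rotate (Nat.mod_lt _ (by omega))
    rw [hgT] at h2
    have h3 : L[k % L.length]? = some (f (τ ⟨k % n, Nat.mod_lt k hn⟩)) := by
      rw [hL, permList]
      rw [List.getElem?_eq_getElem (by simp [hlen] at *; exact Nat.mod_lt k hn)]
      congr 1
      rw [List.getElem_ofFn]
      congr 1
      ext
      simp [permList_length]
    rw [h3] at h2
    exact Option.some.inj h2
  have e1 : shiftComp f τ k = (compList T).comp g := by
    rw [shiftComp_eq, ← hM, hgT, StmtAux.compList_cons]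
  have e2 : shiftComp f τ (k+1) = g.comp (compList T) := by
    rw [shiftComp_eq, ← List.rotate_rotate, ← hM, hgT]
    have : (g :: T).rotate 1 = T ++ [g] := by
      have := List.rotate_cons_succ T g 0
      simpa using this
    rw [this, StmtAux.compList_append_singleton]
  rw [e1, e2, ← hg]
  constructor
  · show g.a * (compList T).a = (compList T).a * g.a; ring
  · show g.a * (compList T).b + g.b =
      g.a * ((compList T).a * g.b + (compList T).b) + (1 - (compList T).a * g.a) * g.b
    ring

lemma shift_a_eq {n : ℕ} (hn : 0 < n) (f : Fin n → LinFun) (τ : Equiv.Perm (Fin n)) (k : ℕ) :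
    (shiftComp f τ k).a = (shiftComp f τ 0).a := by
  induction k with
  | zero => rfl
  | succ k ih => rw [(shift_step hn f τ k).1, ih]

lemma shift_a_pos {n : ℕ} (f : Fin n → LinFun) (hf : ∀ i, 0 < (f i).a)
    (τ : Equiv.Perm (Fin n)) (k : ℕ) : 0 < (shiftComp f τ k).a := by
  rw [shiftComp_eq]
  apply StmtAux.compList_a_pos
  intro x hx
  have : x ∈ permList f τ := List.mem_rotate.mp hx
  obtain ⟨i, hi⟩ := List.mem_ofFn.mp this
  rw [← hi]
  exact hf _

lemma shift_periodic {n : ℕ} (f : Fin n → LinFun) (τ : Equiv.Perm (Fin n)) (k : ℕ) :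
    shiftComp f τ (k + n) = shiftComp f τ k := by
  rw [shiftComp_eq, shiftComp_eq, ← List.rotate_rotate]
  congr 1
  have h : ((permList f τ).rotate k).length = n := by
    rw [List.length_rotate, permList_length]
  have h2 := List.rotate_length ((permList f τ).rotate k)
  rwa [h] at h2
lemma theta_nonneg (F : LinFun) : 0 ≤ F.theta := by
  unfold LinFun.theta
  split_ifs with h
  · exact h
  · have := Complex.neg_pi_lt_arg (⟨F.b, 1 - F.a⟩ : ℂ)
    have hpi := Real.pi_pos
    linarith

lemma theta_lt_two_pi (F : LinFun) : F.theta < 2 * π := by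
  unfold LinFun.theta
  split_ifs with h
  · have := Complex.arg_le_pi (⟨F.b, 1 - F.a⟩ : ℂ)
    have hpi := Real.pi_pos
    linarith
  · push_neg at h
    linarith

lemma vec_ne_zero {F : LinFun} (h : ¬ F.IsId) : (⟨F.b, 1 - F.a⟩ : ℂ) ≠ 0 := by
  intro h0
  apply h
  have hre : F.b = 0 := by
    have := congrArg Complex.re h0
    simpa using this
  have him : 1 - F.a = 0 := by
    have := congrArg Complex.im h0
    simpa using this
  cases F with | mk a b =>
    simp only [LinFun.IsId, LinFun.idf, LinFun.mk.injEq]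
    constructor
    · simp only at him; linarith
    · simpa using hre

lemma vec_polar {F : LinFun} (h : ¬ F.IsId) :
    0 < ‖(⟨F.b, 1 - F.a⟩ : ℂ)‖ ∧
    F.b = ‖(⟨F.b, 1 - F.a⟩ : ℂ)‖ * Real.cos F.theta ∧
    1 - F.a = ‖(⟨F.b, 1 - F.a⟩ : ℂ)‖ * Real.sin F.theta := by
  have hz := vec_ne_zero h
  have habs : 0 < ‖(⟨F.b, 1 - F.a⟩ : ℂ)‖ := by
    exact norm_pos_iff.mpr hz
  refine ⟨habs, ?_, ?_⟩
  · have hcos : Real.cos F.theta = Real.cos (Complex.arg ⟨F.b, 1 - F.a⟩) := by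
      unfold LinFun.theta
      split_ifs
      · rfl
      · exact Real.cos_add_two_pi _
    rw [hcos, Complex.cos_arg hz]
    have : (⟨F.b, 1 - F.a⟩ : ℂ).re = F.b := rfl
    rw [this]
    field_simp
  · have hsin : Real.sin F.theta = Real.sin (Complex.arg ⟨F.b, 1 - F.a⟩) := by
      unfold LinFun.theta
      split_ifs
      · rfl
      · exact Real.sin_add_two_pi _
    rw [hsin, Complex.sin_arg]
    have : (⟨F.b, 1 - F.a⟩ : ℂ).im = 1 - F.a := rfl
    rw [this]
    field_simp

noncomputable def psiA (t x : ℝ) : ℝ :=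
  if 0 < t then Real.arctan (-x / t) else π + Real.arctan (-x / t)

lemma sqrt_sq_add_pos {t x : ℝ} (ht : t ≠ 0) : 0 < Real.sqrt (t^2 + x^2) := by
  apply Real.sqrt_pos.mpr
  positivity

lemma cos_psi {t : ℝ} (ht : t ≠ 0) (x : ℝ) :
    Real.cos (psiA t x) * Real.sqrt (t^2 + x^2) = t := by
  have key : ∀ s : ℝ, s ≠ 0 → Real.sqrt (s^2 + x^2) = |s| * Real.sqrt (1 + (-x/s)^2) := by
    intro s hs
    rw [← Real.sqrt_sq_eq_abs, ← Real.sqrt_mul (sq_nonneg s)]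
    congr 1
    field_simp
  rcases lt_or_gt_of_ne ht with hneg | hpos
  · have hne : ¬ (0 < t) := by linarith
    simp only [psiA, hne, if_false]
    rw [add_comm, Real.cos_add_pi, Real.cos_arctan, key t ht, abs_of_neg hneg]
    have h2 : Real.sqrt (1 + (-x/t)^2) ≠ 0 := by positivity
    field_simp
  · simp only [psiA, hpos, if_true]
    rw [Real.cos_arctan, key t ht, abs_of_pos hpos]
    have h2 : Real.sqrt (1 + (-x/t)^2) ≠ 0 := by positivity
    field_simp

lemma sin_psi {t : ℝ} (ht : t ≠ 0) (x : ℝ) :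
    Real.sin (psiA t x) * Real.sqrt (t^2 + x^2) = -x := by
  have key : ∀ s : ℝ, s ≠ 0 → Real.sqrt (s^2 + x^2) = |s| * Real.sqrt (1 + (-x/s)^2) := by
    intro s hs
    rw [← Real.sqrt_sq_eq_abs, ← Real.sqrt_mul (sq_nonneg s)]
    congr 1
    field_simp
  have h2 : Real.sqrt (1 + (-x/t)^2) ≠ 0 := by positivity
  rcases lt_or_gt_of_ne ht with hneg | hpos
  · have hne : ¬ (0 < t) := by linarith
    simp only [psiA, hne, if_false]
    rw [add_comm, Real.sin_add_pi, Real.sin_arctan, key t ht, abs_of_neg hneg]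
    field_simp
  · simp only [psiA, hpos, if_true]
    rw [Real.sin_arctan, key t ht, abs_of_pos hpos]
    field_simp

lemma H_eq_cos {t : ℝ} (ht : t ≠ 0) (θ x : ℝ) :
    t * Real.cos θ - x * Real.sin θ =
      Real.sqrt (t^2 + x^2) * Real.cos (θ - psiA t x) := by
  rw [Real.cos_sub]
  have h1 := cos_psi ht x
  have h2 := sin_psi ht x
  linear_combination (-Real.cos θ) * h1 + (-Real.sin θ) * h2

lemma psi_bounds_pos {t : ℝ} (ht : 0 < t) (x : ℝ) :
    -(π/2) < psiA t x ∧ psiA t x < π/2 := by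
  simp only [psiA, ht, if_true]
  exact ⟨Real.neg_pi_div_two_lt_arctan _, Real.arctan_lt_pi_div_two _⟩

lemma psi_bounds_neg {t : ℝ} (ht : t < 0) (x : ℝ) :
    π/2 < psiA t x ∧ psiA t x < π + π/2 := by
  have hne : ¬ (0 < t) := by linarith
  simp only [psiA, hne, if_false]
  have h1 := Real.neg_pi_div_two_lt_arctan (-x/t)
  have h2 := Real.arctan_lt_pi_div_two (-x/t)
  constructor <;> linarith

lemma psi_anti {t : ℝ} (ht : 0 < t) {x y : ℝ} (h : x ≤ y) : psiA t y ≤ psiA t x := by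
  simp only [psiA, ht, if_true]
  apply Real.arctan_strictMono.monotone
  exact (div_le_div_iff_of_pos_right ht).mpr (by linarith)

lemma psi_mono {t : ℝ} (ht : t < 0) {x y : ℝ} (h : x ≤ y) : psiA t x ≤ psiA t y := by
  have hne : ¬ (0 < t) := by linarith
  simp only [psiA, hne, if_false]
  have e : ∀ z : ℝ, -z / t = z / (-t) := fun z => by rw [div_neg, neg_div]
  have : -x / t ≤ -y / t := by
    rw [e x, e y]
    exact (div_le_div_iff_of_pos_right (by linarith)).mpr h
  have := Real.arctan_strictMono.monotone this
  linarith

lemma sign_P1 {t θ x : ℝ} (ht : 0 < t) (hθ : 0 ≤ θ)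
    (hH : t * Real.cos θ - x * Real.sin θ < 0) : psiA t x < θ - π/2 := by
  by_contra hcon
  push_neg at hcon
  have hb := psi_bounds_pos ht x
  have hc : 0 ≤ Real.cos (θ - psiA t x) :=
    Real.cos_nonneg_of_mem_Icc ⟨by linarith [hb.2], by linarith⟩
  have he := H_eq_cos (ne_of_gt ht) θ x
  have hs := sqrt_sq_add_pos (x := x) (ne_of_gt ht)
  nlinarith

lemma sign_P2 {t θ x : ℝ} (ht : 0 < t) (h1 : psiA t x < θ - π/2)
    (hH : 0 < t * Real.cos θ - x * Real.sin θ) : psiA t x < θ - 3*π/2 := by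
  by_contra hcon
  push_neg at hcon
  have hc : Real.cos (θ - psiA t x) ≤ 0 :=
    Real.cos_nonpos_of_pi_div_two_le_of_le (by linarith) (by linarith)
  have he := H_eq_cos (ne_of_gt ht) θ x
  have hs := sqrt_sq_add_pos (x := x) (ne_of_gt ht)
  nlinarith

lemma sign_P3 {t θ x : ℝ} (ht : 0 < t) (hθ2 : θ < 2*π)
    (hH : t * Real.cos θ - x * Real.sin θ < 0) : θ - 3*π/2 < psiA t x := by
  by_contra hcon
  push_neg at hcon
  have hb := psi_bounds_pos ht x
  have he2 : Real.cos (θ - psiA t x) = Real.cos (θ - psiA t x - 2*π) :=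
    (Real.cos_sub_two_pi _).symm
  have hc : 0 ≤ Real.cos (θ - psiA t x - 2*π) :=
    Real.cos_nonneg_of_mem_Icc ⟨by linarith, by linarith [hb.1]⟩
  have he := H_eq_cos (ne_of_gt ht) θ x
  have hs := sqrt_sq_add_pos (x := x) (ne_of_gt ht)
  nlinarith

lemma sign_Q1a {t θ x : ℝ} (ht : t < 0) (hθ2 : θ < 2*π)
    (hH : 0 < t * Real.cos θ - x * Real.sin θ) : θ - π/2 < psiA t x := by
  by_contra hcon
  push_neg at hcon
  have hb := psi_bounds_neg ht x
  have hc : Real.cos (θ - psiA t x) ≤ 0 :=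
    Real.cos_nonpos_of_pi_div_two_le_of_le (by linarith) (by linarith [hb.1])
  have he := H_eq_cos (ne_of_lt ht) θ x
  have hs := sqrt_sq_add_pos (x := x) (ne_of_lt ht)
  nlinarith

lemma sign_Q1b {t θ x : ℝ} (ht : t < 0) (hθ : 0 ≤ θ)
    (hH : 0 < t * Real.cos θ - x * Real.sin θ) : psiA t x < θ + π/2 := by
  by_contra hcon
  push_neg at hcon
  have hb := psi_bounds_neg ht x
  have he2 : Real.cos (θ - psiA t x) = Real.cos (psiA t x - θ) := by
    rw [show θ - psiA t x = -(psiA t x - θ) by ring, Real.cos_neg]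
  have hc : Real.cos (psiA t x - θ) ≤ 0 :=
    Real.cos_nonpos_of_pi_div_two_le_of_le (by linarith) (by linarith [hb.2])
  have he := H_eq_cos (ne_of_lt ht) θ x
  have hs := sqrt_sq_add_pos (x := x) (ne_of_lt ht)
  nlinarith

lemma sign_Q2 {t θ x : ℝ} (ht : t < 0) (h1 : psiA t x < θ + π/2)
    (hH : t * Real.cos θ - x * Real.sin θ < 0) : psiA t x < θ - π/2 := by
  by_contra hcon
  push_neg at hcon
  have hc : 0 ≤ Real.cos (θ - psiA t x) :=
    Real.cos_nonneg_of_mem_Icc ⟨by linarith, by linarith⟩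
  have he := H_eq_cos (ne_of_lt ht) θ x
  have hs := sqrt_sq_add_pos (x := x) (ne_of_lt ht)
  nlinarith

lemma core_pos {t : ℝ} (ht : 0 < t) (n : ℕ) (S Th : ℕ → ℝ)
    (hθ0 : ∀ u, 0 ≤ Th u) (hθ2 : ∀ u, Th u < 2 * π)
    (hmono : ∀ u v, u ≤ v → v < n → S (u+1) ≠ S u → S (v+1) ≠ S v → Th u ≤ Th v)
    (hpre_pos : ∀ u, S u < S (u+1) → 0 < t * Real.cos (Th u) - S u * Real.sin (Th u))
    (hpre_neg : ∀ u, S (u+1) < S u → t * Real.cos (Th u) - S u * Real.sin (Th u) < 0)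
    (hpost_neg : ∀ u, S (u+1) < S u → t * Real.cos (Th u) - S (u+1) * Real.sin (Th u) < 0)
    {p q r : ℕ} (hpq : p < q) (hqr : q < r) (hrn : r < n)
    (hdp : S (p+1) < S p) (hdq : S q < S (q+1)) (hdr : S (r+1) < S r) : False := by
  classical
  set ψ : ℕ → ℝ := fun u => psiA t (S u) with hψ
  have hexq : ∃ j, p < j ∧ S j < S (j+1) := ⟨q, hpq, hdq⟩
  obtain ⟨hpq', hdq'⟩ := Nat.find_spec hexq
  set q' := Nat.find hexq with hq'def
  have hq'le : q' ≤ q := Nat.find_min' hexq ⟨hpq, hdq⟩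
  have gap1 : ∀ j, p < j → j < q' → ¬ S j < S (j+1) := fun j h1 h2 hj =>
    Nat.find_min hexq h2 ⟨h1, hj⟩
  have hexr : ∃ j, q' < j ∧ S (j+1) < S j := ⟨r, by omega, hdr⟩
  obtain ⟨hqr', hdr'⟩ := Nat.find_spec hexr
  set r' := Nat.find hexr with hr'def
  have hr'le : r' ≤ r := Nat.find_min' hexr ⟨by omega, hdr⟩
  have gap2 : ∀ j, q' < j → j < r' → ¬ S (j+1) < S j := fun j h1 h2 hj =>
    Nat.find_min hexr h2 ⟨h1, hj⟩
  have hq'n : q' < n := by omega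
  have hr'n : r' < n := by omega
  have F1 : ∀ u, S (u+1) < S u → ψ (u+1) < Th u - π/2 := fun u h =>
    sign_P1 ht (hθ0 u) (hpost_neg u h)
  have chain1 : ∀ u, p + 1 ≤ u → u ≤ q' → ψ u < Th q' - π/2 := by
    intro u
    induction u with
    | zero => intro h _; omega
    | succ u ih =>
      intro h1 h2
      rcases Nat.eq_or_lt_of_le (Nat.le_of_succ_le_succ h1) with he | hlt
      · -- u = p
        have h3 := F1 p hdp
        have h4 : Th p ≤ Th q' :=
          hmono p q' (by omega) hq'n (ne_of_lt hdp) (ne_of_gt hdq')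
        rw [← he]
        linarith
      · -- p < u, u < q'
        have hu_lt : u < q' := by omega
        rcases lt_trichotomy (S (u+1)) (S u) with hlt2 | heq | hgt
        · have h3 := F1 u hlt2
          have h4 : Th u ≤ Th q' :=
            hmono u q' (by omega) hq'n (ne_of_lt hlt2) (ne_of_gt hdq')
          linarith
        · have : ψ (u+1) = ψ u := by simp only [hψ, heq]
          rw [this]
          exact ih (by omega) (by omega)
        · exact absurd hgt (gap1 u hlt hu_lt)
  have hc1 := chain1 q' (by omega) le_rfl
  have hc2 : ψ q' < Th q' - 3*π/2 := sign_P2 ht hc1 (hpre_pos q' hdq')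
  have chain2 : ∀ u, q' ≤ u → u ≤ r' → ψ u ≤ ψ q' := by
    intro u
    induction u with
    | zero => intro h _; have : q' = 0 := by omega
              rw [this]
    | succ u ih =>
      intro h1 h2
      rcases Nat.eq_or_lt_of_le h1 with he | hlt
      · rw [← he]
      · have h3 : q' ≤ u := by omega
        have hdu : S u ≤ S (u+1) := by
          rcases Nat.eq_or_lt_of_le h3 with he2 | hlt2
          · rw [← he2]; exact le_of_lt hdq'
          · exact le_of_not_gt (gap2 u hlt2 (by omega))
        have h5 : ψ (u+1) ≤ ψ u := psi_anti ht hdu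
        exact le_trans h5 (ih h3 (by omega))
  have hc3 := chain2 r' (by omega) le_rfl
  have hc4 : Th r' - 3*π/2 < ψ r' := sign_P3 ht (hθ2 r') (hpre_neg r' hdr')
  have hmqr : Th q' ≤ Th r' :=
    hmono q' r' (by omega) hr'n (ne_of_gt hdq') (ne_of_lt hdr')
  linarith

lemma core_neg {t : ℝ} (ht : t < 0) (n : ℕ) (S Th : ℕ → ℝ)
    (hθ0 : ∀ u, 0 ≤ Th u) (hθ2 : ∀ u, Th u < 2 * π)
    (hmono : ∀ u v, u ≤ v → v < n → S (u+1) ≠ S u → S (v+1) ≠ S v → Th u ≤ Th v)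
    (hpre_pos : ∀ u, S u < S (u+1) → 0 < t * Real.cos (Th u) - S u * Real.sin (Th u))
    (hpre_neg : ∀ u, S (u+1) < S u → t * Real.cos (Th u) - S u * Real.sin (Th u) < 0)
    (hpost_pos : ∀ u, S u < S (u+1) → 0 < t * Real.cos (Th u) - S (u+1) * Real.sin (Th u))
    {p q r : ℕ} (hpq : p < q) (hqr : q < r) (hrn : r < n)
    (hdp : S p < S (p+1)) (hdq : S (q+1) < S q) (hdr : S r < S (r+1)) : False := by
  classical
  set ψ : ℕ → ℝ := fun u => psiA t (S u) with hψ
  have hexq : ∃ j, p < j ∧ S (j+1) < S j := ⟨q, hpq, hdq⟩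
  obtain ⟨hpq', hdq'⟩ := Nat.find_spec hexq
  set q' := Nat.find hexq with hq'def
  have hq'le : q' ≤ q := Nat.find_min' hexq ⟨hpq, hdq⟩
  have gap1 : ∀ j, p < j → j < q' → ¬ S (j+1) < S j := fun j h1 h2 hj =>
    Nat.find_min hexq h2 ⟨h1, hj⟩
  have hexr : ∃ j, q' < j ∧ S j < S (j+1) := ⟨r, by omega, hdr⟩
  obtain ⟨hqr', hdr'⟩ := Nat.find_spec hexr
  set r' := Nat.find hexr with hr'def
  have hr'le : r' ≤ r := Nat.find_min' hexr ⟨by omega, hdr⟩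
  have gap2 : ∀ j, q' < j → j < r' → ¬ S j < S (j+1) := fun j h1 h2 hj =>
    Nat.find_min hexr h2 ⟨h1, hj⟩
  have hq'n : q' < n := by omega
  have hr'n : r' < n := by omega
  have G1 : ∀ u, S u < S (u+1) → ψ (u+1) < Th u + π/2 := fun u h =>
    sign_Q1b ht (hθ0 u) (hpost_pos u h)
  have chain1 : ∀ u, p + 1 ≤ u → u ≤ q' → ψ u < Th q' + π/2 := by
    intro u
    induction u with
    | zero => intro h _; omega
    | succ u ih =>
      intro h1 h2
      rcases Nat.eq_or_lt_of_le (Nat.le_of_succ_le_succ h1) with he | hlt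
      · have h3 := G1 p hdp
        have h4 : Th p ≤ Th q' :=
          hmono p q' (by omega) hq'n (ne_of_gt hdp) (ne_of_lt hdq')
        rw [← he]
        linarith
      · have hu_lt : u < q' := by omega
        rcases lt_trichotomy (S u) (S (u+1)) with hlt2 | heq | hgt
        · have h3 := G1 u hlt2
          have h4 : Th u ≤ Th q' :=
            hmono u q' (by omega) hq'n (ne_of_gt hlt2) (ne_of_lt hdq')
          linarith
        · have : ψ (u+1) = ψ u := by simp only [hψ, heq]
          rw [this]
          exact ih (by omega) (by omega)
        · exact absurd hgt (gap1 u hlt hu_lt)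
  have hc1 := chain1 q' (by omega) le_rfl
  have hc2 : ψ q' < Th q' - π/2 := sign_Q2 ht hc1 (hpre_neg q' hdq')
  have chain2 : ∀ u, q' ≤ u → u ≤ r' → ψ u ≤ ψ q' := by
    intro u
    induction u with
    | zero => intro h _; have : q' = 0 := by omega
              rw [this]
    | succ u ih =>
      intro h1 h2
      rcases Nat.eq_or_lt_of_le h1 with he | hlt
      · rw [← he]
      · have h3 : q' ≤ u := by omega
        have hdu : S (u+1) ≤ S u := by
          rcases Nat.eq_or_lt_of_le h3 with he2 | hlt2
          · rw [← he2]; exact le_of_lt hdq'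
          · exact le_of_not_gt (gap2 u hlt2 (by omega))
        have h5 : ψ (u+1) ≤ ψ u := psi_mono ht hdu
        exact le_trans h5 (ih h3 (by omega))
  have hc3 := chain2 r' (by omega) le_rfl
  have hc4 : Th r' - π/2 < ψ r' := sign_Q1a ht (hθ2 r') (hpre_pos r' hdr')
  have hmqr : Th q' ≤ Th r' :=
    hmono q' r' (by omega) hr'n (ne_of_lt hdq') (ne_of_gt hdr')
  linarith

lemma assemble_MPM (s : ℕ → ℝ) (n c : ℕ) (hn : 0 < n)
    (hper : ∀ k, s (k + n) = s k)
    (hno : ∀ p q r : ℕ, p < q → q < r → r < n →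
      s (c+p+1) < s (c+p) → s (c+q) < s (c+q+1) → s (c+r+1) < s (c+r) → False) :
    ∃ k m : ℕ, m ≤ n ∧ (∀ i, i < m → s (k+i) ≤ s (k+i+1)) ∧
      (∀ i, m ≤ i → i < n → s (k+i+1) ≤ s (k+i)) := by
  classical
  by_cases hex : ∃ j, j < n ∧ s (c+j+1) < s (c+j)
  · obtain ⟨i0, hi0n, hi0⟩ := hex
    have hfind : ∃ j, s (c+j+1) < s (c+j) := ⟨i0, hi0⟩
    set m1 := Nat.find hfind with hm1def
    have hm1 : s (c+m1+1) < s (c+m1) := Nat.find_spec hfind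
    have hm1le : m1 ≤ i0 := Nat.find_min' hfind hi0
    set P : ℕ → Prop := fun j => s (c+j+1) < s (c+j) with hP
    set m2 := Nat.findGreatest P (n-1) with hm2def
    have hm2 : P m2 := Nat.findGreatest_spec (P := P) (show i0 ≤ n-1 by omega) hi0
    have hm2le : m2 ≤ n - 1 := Nat.findGreatest_le _
    have hm12 : m1 ≤ m2 := Nat.le_findGreatest (by omega) hm1
    have hm2' : s (c+m2+1) < s (c+m2) := hm2
    have mid : ∀ j, m1 ≤ j → j ≤ m2 → s (c+j+1) ≤ s (c+j) := by
      intro j h1 h2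
      by_contra hcon
      push_neg at hcon
      have h1' : m1 ≠ j := by intro h; rw [← h] at hcon; linarith
      have h2' : j ≠ m2 := by intro h; rw [h] at hcon; linarith
      exact hno m1 j m2 (by omega) (by omega) (by omega) hm1 hcon hm2'
    have left_ : ∀ j, j < m1 → s (c+j) ≤ s (c+j+1) := fun j h =>
      le_of_not_gt (Nat.find_min hfind h)
    have right_ : ∀ j, m2 < j → j < n → s (c+j) ≤ s (c+j+1) := fun j h1 h2 =>
      le_of_not_gt (Nat.findGreatest_is_greatest h1 (by omega))
    refine ⟨c + m2 + 1, n - (m2 + 1 - m1), by omega, ?_, ?_⟩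
    · intro i hi
      by_cases hjn : m2 + 1 + i < n
      · have e2 : c + m2 + 1 + i + 1 = c + (m2 + 1 + i) + 1 := by omega
        have e1 : c + m2 + 1 + i = c + (m2 + 1 + i) := by omega
        rw [e2, e1]
        exact right_ (m2+1+i) (by omega) hjn
      · have hj' : (m2 + 1 + i) - n < m1 := by omega
        have e2 : c + m2 + 1 + i + 1 = (c + ((m2+1+i)-n) + 1) + n := by omega
        have e1 : c + m2 + 1 + i = c + ((m2+1+i) - n) + n := by omega
        rw [e2, e1, hper, hper]
        exact left_ _ hj'
    · intro i h1 h2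
      have hjge : n ≤ m2 + 1 + i := by omega
      have hj1 : m1 ≤ (m2+1+i) - n := by omega
      have hj2 : (m2+1+i) - n ≤ m2 := by omega
      have e2 : c + m2 + 1 + i + 1 = (c + ((m2+1+i)-n) + 1) + n := by omega
      have e1 : c + m2 + 1 + i = c + ((m2+1+i)-n) + n := by omega
      rw [e2, e1, hper, hper]
      exact mid _ hj1 hj2
  · push_neg at hex
    refine ⟨c, n, le_rfl, ?_, ?_⟩
    · intro i hi
      exact hex i hi
    · intro i h1 h2
      exact absurd h2 (by omega)

lemma assemble_PMP (s : ℕ → ℝ) (n c : ℕ) (hn : 0 < n)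
    (hper : ∀ k, s (k + n) = s k)
    (hno : ∀ p q r : ℕ, p < q → q < r → r < n →
      s (c+p) < s (c+p+1) → s (c+q+1) < s (c+q) → s (c+r) < s (c+r+1) → False) :
    ∃ k m : ℕ, m ≤ n ∧ (∀ i, i < m → s (k+i) ≤ s (k+i+1)) ∧
      (∀ i, m ≤ i → i < n → s (k+i+1) ≤ s (k+i)) := by
  classical
  by_cases hex : ∃ j, j < n ∧ s (c+j) < s (c+j+1)
  · obtain ⟨i0, hi0n, hi0⟩ := hex
    have hfind : ∃ j, s (c+j) < s (c+j+1) := ⟨i0, hi0⟩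
    set m1 := Nat.find hfind with hm1def
    have hm1 : s (c+m1) < s (c+m1+1) := Nat.find_spec hfind
    have hm1le : m1 ≤ i0 := Nat.find_min' hfind hi0
    set P : ℕ → Prop := fun j => s (c+j) < s (c+j+1) with hP
    set m2 := Nat.findGreatest P (n-1) with hm2def
    have hm2 : P m2 := Nat.findGreatest_spec (P := P) (show i0 ≤ n-1 by omega) hi0
    have hm2le : m2 ≤ n - 1 := Nat.findGreatest_le _
    have hm12 : m1 ≤ m2 := Nat.le_findGreatest (by omega) hm1
    have hm2' : s (c+m2) < s (c+m2+1) := hm2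
    have mid : ∀ j, m1 ≤ j → j ≤ m2 → s (c+j) ≤ s (c+j+1) := by
      intro j h1 h2
      by_contra hcon
      push_neg at hcon
      have h1' : m1 ≠ j := by intro h; rw [← h] at hcon; linarith
      have h2' : j ≠ m2 := by intro h; rw [h] at hcon; linarith
      exact hno m1 j m2 (by omega) (by omega) (by omega) hm1 hcon hm2'
    have left_ : ∀ j, j < m1 → s (c+j+1) ≤ s (c+j) := fun j h =>
      le_of_not_gt (Nat.find_min hfind h)
    have right_ : ∀ j, m2 < j → j < n → s (c+j+1) ≤ s (c+j) := fun j h1 h2 =>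
      le_of_not_gt (Nat.findGreatest_is_greatest h1 (by omega))
    refine ⟨c + m1, m2 + 1 - m1, by omega, ?_, ?_⟩
    · intro i hi
      have e2 : c + m1 + i + 1 = c + (m1 + i) + 1 := by omega
      have e1 : c + m1 + i = c + (m1 + i) := by omega
      rw [e2, e1]
      exact mid (m1+i) (by omega) (by omega)
    · intro i h1 h2
      by_cases hjn : m1 + i < n
      · have e2 : c + m1 + i + 1 = c + (m1 + i) + 1 := by omega
        have e1 : c + m1 + i = c + (m1 + i) := by omega
        rw [e2, e1]
        exact right_ (m1+i) (by omega) hjn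
      · have hj' : (m1 + i) - n < m1 := by omega
        have e2 : c + m1 + i + 1 = (c + ((m1+i)-n) + 1) + n := by omega
        have e1 : c + m1 + i = c + ((m1+i)-n) + n := by omega
        rw [e2, e1, hper, hper]
        exact left_ _ hj'
  · push_neg at hex
    refine ⟨c, 0, by omega, ?_, ?_⟩
    · intro i hi
      exact absurd hi (by omega)
    · intro i h1 h2
      exact hex i h2

/-- cyclic unimodality of the intercepts of the composites of the shifts of a
counterclockwise permutation. `shiftComp f τ k` is `f^{τ_k}`, and `List.rotate` is cyclic,
so the indices of the shifts are read modulo `n`. -/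
theorem stmt11 {n : ℕ} (f : Fin n → LinFun) (hf : ∀ i, 0 < (f i).a)
    (τ : Equiv.Perm (Fin n)) (hccw : Counterclockwise f τ) :
    ∃ k m : ℕ, m ≤ n ∧
      (∀ i : ℕ, i < m →
        (shiftComp f τ (k + i)).b ≤ (shiftComp f τ (k + i + 1)).b) ∧
      (∀ i : ℕ, m ≤ i → i < n →
        (shiftComp f τ (k + i + 1)).b ≤ (shiftComp f τ (k + i)).b) := by
  classical
  rcases Nat.eq_zero_or_pos n with hn0 | hn
  · exact ⟨0, 0, by omega, fun i hi => absurd hi (by omega),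
      fun i h1 h2 => absurd h2 (by omega)⟩
  set s : ℕ → ℝ := fun k => (shiftComp f τ k).b with hsdef
  set A : ℝ := (shiftComp f τ 0).a with hAdef
  have hApos : 0 < A := shift_a_pos f hf τ 0
  set t : ℝ := 1 - A with htdef
  set G : ℕ → LinFun := fun k => f (τ ⟨k % n, Nat.mod_lt k hn⟩) with hGdef
  have hGa : ∀ k, 0 < (G k).a := fun k => hf _
  have hstep : ∀ k, s (k+1) = (G k).a * s k + t * (G k).b := by
    intro k
    have h := (shift_step hn f τ k).2
    rw [shift_a_eq hn f τ k] at h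
    exact h
  have hper : ∀ k, s (k + n) = s k := fun k => by
    show (shiftComp f τ (k+n)).b = (shiftComp f τ k).b
    rw [shift_periodic]
  have hnonid : ∀ k, s (k+1) ≠ s k → ¬ (G k).IsId := by
    intro k hne hid
    apply hne
    have h := hstep k
    rw [hid] at h
    simp only [LinFun.idf] at h
    rw [h]; ring
  have hθ0 : ∀ k, 0 ≤ (G k).theta := fun k => theta_nonneg _
  have hθ2 : ∀ k, (G k).theta < 2 * π := fun k => theta_lt_two_pi _
  have hvec : ∀ k : ℕ, s (k+1) ≠ s k →
      (s k < s (k+1) → 0 < t * Real.cos ((G k).theta) - s k * Real.sin ((G k).theta)) ∧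
      (s (k+1) < s k → t * Real.cos ((G k).theta) - s k * Real.sin ((G k).theta) < 0) ∧
      (s k < s (k+1) → 0 < t * Real.cos ((G k).theta) - s (k+1) * Real.sin ((G k).theta)) ∧
      (s (k+1) < s k → t * Real.cos ((G k).theta) - s (k+1) * Real.sin ((G k).theta) < 0) := by
    intro k hne
    have hni := hnonid k hne
    obtain ⟨hR, hb, hγ⟩ := vec_polar hni
    set R := ‖(⟨(G k).b, 1 - (G k).a⟩ : ℂ)‖ with hRdef
    have hst := hstep k
    have ha := hGa k
    have e1 : s (k+1) - s k =
        R * (t * Real.cos ((G k).theta) - s k * Real.sin ((G k).theta)) := by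
      rw [hst]
      linear_combination t * hb - s k * hγ
    have e2 : (G k).a * (s (k+1) - s k) =
        R * (t * Real.cos ((G k).theta) - s (k+1) * Real.sin ((G k).theta)) := by
      rw [hst]
      linear_combination t * hb - ((G k).a * s k + t * (G k).b) * hγ
    refine ⟨?_, ?_, ?_, ?_⟩ <;> intro h <;> nlinarith [e1, e2, hR, ha]
  obtain ⟨c0, hc0⟩ := hccw
  set c : ℕ := if c0 < n then c0 else 0 with hcdef
  have hc : c < n := by rw [hcdef]; split <;> omega
  have hmono : ∀ u v : ℕ, u ≤ v → v < n → s (c+u+1) ≠ s (c+u) → s (c+v+1) ≠ s (c+v) →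
      (G (c+u)).theta ≤ (G (c+v)).theta := by
    intro u v huv hvn hneu hnev
    have hiu := hnonid _ hneu
    have hiv := hnonid _ hnev
    apply hc0 ⟨(c+u) % n, Nat.mod_lt _ hn⟩ ⟨(c+v) % n, Nat.mod_lt _ hn⟩ hiu hiv
    rcases lt_or_ge c0 n with h1 | h1
    · have hcc : c = c0 := by rw [hcdef, if_pos h1]
      by_cases h3 : c + v < n
      · have h4 : c + u < n := by omega
        have emu : (c+u) % n = c+u := Nat.mod_eq_of_lt h4
        have emv : (c+v) % n = c+v := Nat.mod_eq_of_lt h3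
        exact Or.inl ⟨show c0 ≤ (c+u) % n by rw [emu]; omega,
          Fin.mk_le_mk.mpr (by rw [emu, emv]; omega)⟩
      · by_cases h4 : c + u < n
        · have emu : (c+u) % n = c+u := Nat.mod_eq_of_lt h4
          have emv : (c+v) % n = c+v-n := by
            rw [Nat.mod_eq_sub_mod (by omega)]; exact Nat.mod_eq_of_lt (by omega)
          exact Or.inr (Or.inr ⟨show c0 ≤ (c+u) % n by rw [emu]; omega,
            show (c+v) % n < c0 by rw [emv]; omega⟩)
        · have emu : (c+u) % n = c+u-n := by
            rw [Nat.mod_eq_sub_mod (by omega)]; exact Nat.mod_eq_of_lt (by omega)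
          have emv : (c+v) % n = c+v-n := by
            rw [Nat.mod_eq_sub_mod (by omega)]; exact Nat.mod_eq_of_lt (by omega)
          exact Or.inr (Or.inl ⟨Fin.mk_le_mk.mpr (by rw [emu, emv]; omega),
            show (c+v) % n < c0 by rw [emv]; omega⟩)
    · have hcc : c = 0 := by rw [hcdef, if_neg (by omega)]
      have emu : (c+u) % n = c+u := Nat.mod_eq_of_lt (by omega)
      have emv : (c+v) % n = c+v := Nat.mod_eq_of_lt (by omega)
      exact Or.inr (Or.inl ⟨Fin.mk_le_mk.mpr (by rw [emu, emv]; omega),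
        show (c+v) % n < c0 by rw [emv]; omega⟩)
  rcases lt_trichotomy t 0 with htneg | htzero | htpos
  · -- t < 0 : forbid + - + patterns
    apply assemble_PMP s n c hn hper
    intro p q r hpq hqr hrn h1 h2 h3
    exact core_neg htneg n (fun u => s (c+u)) (fun u => (G (c+u)).theta)
      (fun u => hθ0 _) (fun u => hθ2 _)
      (fun u v huv hvn hneu hnev => hmono u v huv hvn hneu hnev)
      (fun u h => (hvec (c+u) (ne_of_gt h)).1 h)
      (fun u h => (hvec (c+u) (ne_of_lt h)).2.1 h)
      (fun u h => (hvec (c+u) (ne_of_gt h)).2.2.1 h)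
      hpq hqr hrn h1 h2 h3
  · -- t = 0
    rcases lt_trichotomy (s c) 0 with hsneg | hszero | hspos
    · have hall : ∀ u, s (c+u) < 0 := by
        intro u
        induction u with
        | zero => exact hsneg
        | succ u ih =>
          have h := hstep (c+u)
          rw [htzero] at h
          have ha := hGa (c+u)
          show s (c+u+1) < 0
          nlinarith
      apply assemble_PMP s n c hn hper
      intro p q r hpq hqr hrn h1 h2 h3
      have hq := (hvec (c+q) (ne_of_lt h2)).2.1 h2
      have hr := (hvec (c+r) (ne_of_gt h3)).1 h3
      rw [htzero] at hq hr
      have hsq := hall q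
      have hsr := hall r
      have hsinq : Real.sin ((G (c+q)).theta) < 0 := by
        by_contra hcon
        push_neg at hcon
        nlinarith [mul_nonneg (by linarith : (0:ℝ) ≤ -(s (c+q))) hcon]
      have hsinr : 0 < Real.sin ((G (c+r)).theta) := by
        by_contra hcon
        push_neg at hcon
        nlinarith [mul_nonpos_of_nonneg_of_nonpos (by linarith : (0:ℝ) ≤ -(s (c+r))) hcon]
      have hπq : π < (G (c+q)).theta := by
        by_contra hcon
        push_neg at hcon
        exact absurd (Real.sin_nonneg_of_nonneg_of_le_pi (hθ0 _) hcon) (by linarith)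
      have hπr : (G (c+r)).theta < π := by
        by_contra hcon
        push_neg at hcon
        have h5 : Real.sin ((G (c+r)).theta - π) = - Real.sin ((G (c+r)).theta) :=
          Real.sin_sub_pi _
        have h6 : 0 ≤ Real.sin ((G (c+r)).theta - π) :=
          Real.sin_nonneg_of_nonneg_of_le_pi (by linarith) (by linarith [hθ2 (c+r)])
        linarith
      have hm := hmono q r (by omega) hrn (ne_of_lt h2) (ne_of_gt h3)
      linarith
    · have hall : ∀ u, s (c+u) = 0 := by
        intro u
        induction u with
        | zero => exact hszero
        | succ u ih =>
          have h := hstep (c+u)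
          rw [htzero] at h
          show s (c+u+1) = 0
          rw [h, ih]; ring
      refine ⟨c, 0, by omega, fun i hi => absurd hi (by omega), ?_⟩
      intro i h1 h2
      have e1 : s (c+i+1) = 0 := hall (i+1)
      have e2 : s (c+i) = 0 := hall i
      show s (c+i+1) ≤ s (c+i)
      rw [e1, e2]
    · have hall : ∀ u, 0 < s (c+u) := by
        intro u
        induction u with
        | zero => exact hspos
        | succ u ih =>
          have h := hstep (c+u)
          rw [htzero] at h
          have ha := hGa (c+u)
          show 0 < s (c+u+1)
          nlinarith
      apply assemble_MPM s n c hn hper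
      intro p q r hpq hqr hrn h1 h2 h3
      have hq := (hvec (c+q) (ne_of_gt h2)).1 h2
      have hr := (hvec (c+r) (ne_of_lt h3)).2.1 h3
      rw [htzero] at hq hr
      have hsq := hall q
      have hsr := hall r
      have hsinq : Real.sin ((G (c+q)).theta) < 0 := by
        by_contra hcon
        push_neg at hcon
        nlinarith [mul_nonneg (le_of_lt hsq) hcon]
      have hsinr : 0 < Real.sin ((G (c+r)).theta) := by
        by_contra hcon
        push_neg at hcon
        nlinarith [mul_nonpos_of_nonneg_of_nonpos (le_of_lt hsr) hcon]
      have hπq : π < (G (c+q)).theta := by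
        by_contra hcon
        push_neg at hcon
        exact absurd (Real.sin_nonneg_of_nonneg_of_le_pi (hθ0 _) hcon) (by linarith)
      have hπr : (G (c+r)).theta < π := by
        by_contra hcon
        push_neg at hcon
        have h5 : Real.sin ((G (c+r)).theta - π) = - Real.sin ((G (c+r)).theta) :=
          Real.sin_sub_pi _
        have h6 : 0 ≤ Real.sin ((G (c+r)).theta - π) :=
          Real.sin_nonneg_of_nonneg_of_le_pi (by linarith) (by linarith [hθ2 (c+r)])
        linarith
      have hm := hmono q r (by omega) hrn (ne_of_gt h2) (ne_of_lt h3)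
      linarith
  · -- t > 0 : forbid - + - patterns
    apply assemble_MPM s n c hn hper
    intro p q r hpq hqr hrn h1 h2 h3
    exact core_pos htpos n (fun u => s (c+u)) (fun u => (G (c+u)).theta)
      (fun u => hθ0 _) (fun u => hθ2 _)
      (fun u v huv hvn hneu hnev => hmono u v huv hvn hneu hnev)
      (fun u h => (hvec (c+u) (ne_of_gt h)).1 h)
      (fun u h => (hvec (c+u) (ne_of_lt h)).2.1 h)
      (fun u h => (hvec (c+u) (ne_of_lt h)).2.2.2 h)
      hpq hqr hrn h1 h2 h3
end

section
/- Let f₁,…,f_n be arbitrary linear functions. There exists a real number r>0 such that for every real ε with |ε|<r and all permutations σ,ρ of [n]: if β((f^{(ε)})^σ) ≤ β((f^{(ε)})^ρ), then β(f^σ) ≤ β(f^ρ). Here f_i^{(ε)}(x) = f_i(x) if α(f_i) ≠ 0, and f_i^{(ε)}(x) = f_i(x)+εx if α(f_i) = 0. -/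
lemma epsPert_zero (g : LinFun) : epsPert g 0 = g := by
  unfold epsPert
  split
  · cases g with
    | mk a b => simp_all
  · rfl

lemma cont_foldl (L : List (ℝ → LinFun)) (hLa : ∀ F ∈ L, Continuous fun ε => (F ε).a)
    (hLb : ∀ F ∈ L, Continuous fun ε => (F ε).b) (acc : ℝ → LinFun)
    (ha : Continuous fun ε => (acc ε).a) (hb : Continuous fun ε => (acc ε).b) :
    Continuous (fun ε => ((L.map (· ε)).foldl (fun acc g => g.comp acc) (acc ε)).a) ∧
    Continuous (fun ε => ((L.map (· ε)).foldl (fun acc g => g.comp acc) (acc ε)).b) := by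
  induction L generalizing acc with
  | nil => exact ⟨ha, hb⟩
  | cons F t ih =>
    simp only [List.map_cons, List.foldl_cons]
    exact ih (fun G hG => hLa G (List.mem_cons_of_mem _ hG))
      (fun G hG => hLb G (List.mem_cons_of_mem _ hG))
      (fun ε => (F ε).comp (acc ε))
      (((hLa F List.mem_cons_self).mul ha))
      (((hLa F List.mem_cons_self).mul hb).add (hLb F List.mem_cons_self))

lemma cont_permComp_b {n : ℕ} (f : Fin n → LinFun) (σ : Equiv.Perm (Fin n)) :
    Continuous (fun ε => (permComp (fun i => epsPert (f i) ε) σ).b) := by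
  have key := cont_foldl (List.ofFn fun i => fun ε => epsPert (f (σ i)) ε)
    (by
      intro F hF
      rw [List.mem_ofFn] at hF
      obtain ⟨i, hi⟩ := hF
      subst hi
      simp only [epsPert]
      split
      · exact continuous_id
      · exact continuous_const)
    (by
      intro F hF
      rw [List.mem_ofFn] at hF
      obtain ⟨i, hi⟩ := hF
      subst hi
      simp only [epsPert]
      split <;> exact continuous_const)
    (fun _ => LinFun.idf) continuous_const continuous_const
  have : ∀ ε : ℝ, (permComp (fun i => epsPert (f i) ε) σ).b =
      (((List.ofFn fun i => fun ε => epsPert (f (σ i)) ε).map (· ε)).foldl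
        (fun acc g => g.comp acc) LinFun.idf).b := by
    intro ε
    simp only [permComp, permList, compList, List.map_ofFn, Function.comp]
    rfl
  simpa only [this] using key.2

/-- small perturbations preserve the comparison of composites. -/
theorem stmt14 {n : ℕ} (f : Fin n → LinFun) :
    ∃ r : ℝ, 0 < r ∧ ∀ ε : ℝ, |ε| < r → ∀ σ ρ : Equiv.Perm (Fin n),
      (permComp (fun i => epsPert (f i) ε) σ).b ≤
        (permComp (fun i => epsPert (f i) ε) ρ).b →
      (permComp f σ).b ≤ (permComp f ρ).b := by
  set G : Equiv.Perm (Fin n) → ℝ → ℝ :=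
    fun σ ε => (permComp (fun i => epsPert (f i) ε) σ).b with hG
  have hG0 : ∀ σ, G σ 0 = (permComp f σ).b := by
    intro σ
    simp only [hG, epsPert_zero]
  have hcont : ∀ σ, Continuous (G σ) := fun σ => cont_permComp_b f σ
  have hev : ∀ᶠ ε in nhds (0 : ℝ), ∀ σ ρ : Equiv.Perm (Fin n),
      (permComp f ρ).b < (permComp f σ).b → G ρ ε < G σ ε := by
    rw [Filter.eventually_all]
    intro σ
    rw [Filter.eventually_all]
    intro ρ
    by_cases h : (permComp f ρ).b < (permComp f σ).b
    · have := ContinuousAt.eventually_lt (f := G ρ) (g := G σ) (x₀ := 0)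
        (hcont ρ).continuousAt (hcont σ).continuousAt (by rw [hG0, hG0]; exact h)
      filter_upwards [this] with ε hε _ using hε
    · filter_upwards with ε h' using absurd h' h
  rw [Metric.eventually_nhds_iff] at hev
  obtain ⟨r, hr, hball⟩ := hev
  refine ⟨r, hr, fun ε hε σ ρ hle => ?_⟩
  by_contra hcon
  push_neg at hcon
  have := hball (by simpa [Real.dist_eq] using hε) σ ρ hcon
  exact absurd hle (not_le.mpr this)
end
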